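/- (Birman–Schwinger correspondence, direction i) Suppose μ > 0, z > sup of the essential spectrum of H_μ(K), and f ∈ L^{2,a}((T^d)²) satisfies H_μ(K)f = zf with φ(p) := ∫ f(p,t)η(dt). Then f(p,q) = -μ[φ(p)-φ(q)]/(E(K;p,q)-z), and φ satisfies the one-dimensional integral equation φ(p)·[1 + μ∫ η(dt)/(E(K;p,t)-z)] = μ∫ φ(q)η(dq)/(E(K;p,q)-z) for a.e. p. -/

import Mathlib

open MeasureTheory Real

instance : Fact (0 < 2 * π) := ⟨by positivity⟩

/-- Equip the circle `ℝ/2πℤ` with its Haar measure. -/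
noncomputable instance : MeasureSpace Real.Angle :=
  inferInstanceAs (MeasureSpace (AddCircle (2 * π)))

instance : SigmaFinite (volume : Measure Real.Angle) :=
  inferInstanceAs (SigmaFinite (volume : Measure (AddCircle (2 * π))))

/-- The lattice dispersion relation `ε(p) = 2∑ᵢ (1 - cos pⁱ)` on the torus `T^d`. -/
noncomputable def eps (d : ℕ) (p : Fin d → Real.Angle) : ℝ :=
  2 * ∑ i, (1 - (p i).cos)

/-- The normalized Haar measure `η` on the torus `T^d`. -/
noncomputable def haarT (d : ℕ) : Measure (Fin d → Real.Angle) :=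
  (ENNReal.ofReal ((2 * π) ^ d))⁻¹ • volume

/-- The three-particle dispersion `E(K;p,q) = ε(p) + ε(q) + γ ε(K - p - q)`. -/
noncomputable def Edisp (d : ℕ) (γ : ℝ) (K p q : Fin d → Real.Angle) : ℝ :=
  eps d p + eps d q + γ * eps d (K - p - q)

instance : CompactSpace Real.Angle := inferInstanceAs (CompactSpace (AddCircle (2 * π)))

instance : BorelSpace Real.Angle := inferInstanceAs (BorelSpace (AddCircle (2 * π)))

instance : SecondCountableTopology Real.Angle :=
  inferInstanceAs (SecondCountableTopology (AddCircle (2 * π)))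

instance : IsFiniteMeasure (volume : Measure Real.Angle) :=
  inferInstanceAs (IsFiniteMeasure (volume : Measure (AddCircle (2 * π))))

instance (d : ℕ) : IsFiniteMeasure (haarT d) := by
  constructor
  unfold haarT
  rw [Measure.smul_apply, smul_eq_mul]
  exact ENNReal.mul_lt_top (by simp; positivity) (measure_lt_top _ _)

lemma eps_cont (d : ℕ) : Continuous (eps d) := by
  unfold eps
  exact continuous_const.mul (continuous_finset_sum _ fun i _ =>
    continuous_const.sub (Real.Angle.continuous_cos.comp (continuous_apply i)))

lemma Edisp_cont (d : ℕ) (γ : ℝ) (K : Fin d → Real.Angle) :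
    Continuous (fun x : (Fin d → Real.Angle) × (Fin d → Real.Angle) =>
      Edisp d γ K x.1 x.2) := by
  unfold Edisp
  apply Continuous.add
  apply Continuous.add
  · exact (eps_cont d).comp continuous_fst
  · exact (eps_cont d).comp continuous_snd
  · exact continuous_const.mul ((eps_cont d).comp
      ((continuous_const.sub continuous_fst).sub continuous_snd))

/-- Birman–Schwinger, direction i: if `H_μ(K)f = zf` with `z` above the
essential spectrum (so `E(K;p,q) < z` and `Δ_μ(K,p;z) > 0`), then with
`φ(p) = ∫ f(p,t)η(dt)` one has `f(p,q) = -μ[φ(p)-φ(q)]/(E(K;p,q)-z)` and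
`φ(p)·Δ_μ(K,p;z) = μ∫ φ(q)η(dq)/(E(K;p,q)-z)`. -/
theorem stmt11 (d : ℕ) (γ μ z : ℝ) (hγ : 0 < γ) (hμ : 0 < μ) (K : Fin d → Real.Angle)
    (hz1 : ∀ p q, Edisp d γ K p q < z)
    (hz2 : ∀ p, 0 < 1 + μ * ∫ t, (Edisp d γ K p t - z)⁻¹ ∂(haarT d))
    (f : (Fin d → Real.Angle) × (Fin d → Real.Angle) → ℝ)
    (hfL2 : MemLp f 2 ((haarT d).prod (haarT d)))
    (hfa : ∀ p q, f (p, q) = -f (q, p))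
    (heig : ∀ᵐ x ∂((haarT d).prod (haarT d)),
      Edisp d γ K x.1 x.2 * f x
        + μ * ((∫ t, f (x.1, t) ∂(haarT d)) + ∫ t, f (t, x.2) ∂(haarT d)) = z * f x) :
    (∀ᵐ x ∂((haarT d).prod (haarT d)),
      f x = -μ * ((∫ t, f (x.1, t) ∂(haarT d)) - ∫ t, f (x.2, t) ∂(haarT d))
              / (Edisp d γ K x.1 x.2 - z)) ∧
    (∀ᵐ p ∂(haarT d),
      (∫ t, f (p, t) ∂(haarT d)) * (1 + μ * ∫ t, (Edisp d γ K p t - z)⁻¹ ∂(haarT d))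
        = μ * ∫ q, (∫ t, f (q, t) ∂(haarT d)) / (Edisp d γ K p q - z) ∂(haarT d)) := by
  set η := haarT d with hη
  set φ : (Fin d → Real.Angle) → ℝ := fun p => ∫ t, f (p, t) ∂η with hφdef
  -- basic integrability facts
  have hfInt : Integrable f (η.prod η) := hfL2.integrable one_le_two
  have hφm : AEStronglyMeasurable φ η :=
    hfL2.aestronglyMeasurable.integral_prod_right'
  have hφInt : Integrable φ η := hfInt.integral_prod_left
  -- uniform gap below z
  obtain ⟨x₀, -, hx₀⟩ := isCompact_univ.exists_isMaxOn (Set.univ_nonempty)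
    (Edisp_cont d γ K).continuousOn
  set c : ℝ := z - Edisp d γ K x₀.1 x₀.2 with hc
  have hcpos : 0 < c := sub_pos.mpr (hz1 x₀.1 x₀.2)
  have hgap : ∀ p q, c ≤ z - Edisp d γ K p q := by
    intro p q
    have := hx₀ (Set.mem_univ (p, q))
    simp only [Set.mem_setOf_eq] at this
    linarith
  have hne : ∀ p q, Edisp d γ K p q - z ≠ 0 := fun p q =>
    ne_of_lt (sub_neg.mpr (hz1 p q))
  have hinvbdd : ∀ p q, ‖(Edisp d γ K p q - z)⁻¹‖ ≤ c⁻¹ := by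
    intro p q
    rw [norm_inv, Real.norm_eq_abs, abs_of_neg (sub_neg.mpr (hz1 p q))]
    rw [neg_sub]
    exact inv_anti₀ hcpos (hgap p q)
  -- integrability of the resolvent kernel slices
  have hinvcont : ∀ p, Continuous (fun q => (Edisp d γ K p q - z)⁻¹) := by
    intro p
    exact Continuous.inv₀
      (((Edisp_cont d γ K).comp (Continuous.prodMk_right p)).sub continuous_const)
      (fun q => hne p q)
  have hinvInt : ∀ p, Integrable (fun q => (Edisp d γ K p q - z)⁻¹) η := by
    intro p
    exact ⟨(hinvcont p).aestronglyMeasurable,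
      HasFiniteIntegral.of_bounded (ae_of_all _ fun q => hinvbdd p q)⟩
  have hφinvInt : ∀ p, Integrable (fun q => (Edisp d γ K p q - z)⁻¹ * φ q) η := by
    intro p
    exact hφInt.bdd_mul (hinvcont p).aestronglyMeasurable (c := c⁻¹) (ae_of_all _ fun q => hinvbdd p q)
  -- first conclusion
  have key : ∀ᵐ x ∂(η.prod η),
      f x = -μ * ((∫ t, f (x.1, t) ∂η) - ∫ t, f (x.2, t) ∂η)
              / (Edisp d γ K x.1 x.2 - z) := by
    filter_upwards [heig] with x hx
    have hsw : (∫ t, f (t, x.2) ∂η) = -∫ t, f (x.2, t) ∂η := by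
      rw [← integral_neg]
      exact integral_congr_ae (ae_of_all _ fun t => hfa t x.2)
    rw [hsw] at hx
    rw [eq_div_iff (hne x.1 x.2)]
    have h2 : f x * (Edisp d γ K x.1 x.2 - z)
        = Edisp d γ K x.1 x.2 * f x - z * f x := by ring
    rw [h2]
    linarith [hx]
  refine ⟨key, ?_⟩
  -- second conclusion
  have hae := Measure.ae_ae_of_ae_prod key
  filter_upwards [hae] with p hp
  have hp' : ∀ᵐ q ∂η, f (p, q) = -μ * (φ p - φ q) / (Edisp d γ K p q - z) := hp
  have h1 : φ p = ∫ q, -μ * (φ p - φ q) / (Edisp d γ K p q - z) ∂η :=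
    integral_congr_ae hp'
  have h2 : (∫ q, -μ * (φ p - φ q) / (Edisp d γ K p q - z) ∂η)
      = (-μ * φ p) * (∫ q, (Edisp d γ K p q - z)⁻¹ ∂η)
        + μ * ∫ q, (Edisp d γ K p q - z)⁻¹ * φ q ∂η := by
    calc (∫ q, -μ * (φ p - φ q) / (Edisp d γ K p q - z) ∂η)
        = ∫ q, ((-μ * φ p) * (Edisp d γ K p q - z)⁻¹
            + μ * ((Edisp d γ K p q - z)⁻¹ * φ q)) ∂η := by
          apply integral_congr_ae
          apply ae_of_all
          intro q
          dsimp only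
          rw [div_eq_mul_inv]
          ring
      _ = (∫ q, (-μ * φ p) * (Edisp d γ K p q - z)⁻¹ ∂η)
            + ∫ q, μ * ((Edisp d γ K p q - z)⁻¹ * φ q) ∂η :=
          integral_add ((hinvInt p).const_mul _) ((hφinvInt p).const_mul μ)
      _ = (-μ * φ p) * (∫ q, (Edisp d γ K p q - z)⁻¹ ∂η)
            + μ * ∫ q, (Edisp d γ K p q - z)⁻¹ * φ q ∂η := by
          rw [integral_const_mul, integral_const_mul]
  rw [h2] at h1
  have h3 : (∫ q, φ q / (Edisp d γ K p q - z) ∂η)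
      = ∫ q, (Edisp d γ K p q - z)⁻¹ * φ q ∂η := by
    apply integral_congr_ae
    apply ae_of_all
    intro q
    dsimp only
    rw [div_eq_mul_inv, mul_comm]
  show φ p * (1 + μ * ∫ t, (Edisp d γ K p t - z)⁻¹ ∂η)
      = μ * ∫ q, φ q / (Edisp d γ K p q - z) ∂η
  rw [h3]
  linear_combination h1
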